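/- Let ε : E → F be a homomorphism of finitely generated free abelian groups. There exists a unique endomorphism d of bidegree (-1, 1) of the bigraded algebra Kos(ε) = Γ(E) ⊗ ⋀(F) satisfying: (1) d(x·x') = (dx)·x' + (-1)^q x·(dx') for x homogeneous of bidegree (p, q); (2) d(γ_k(x) ⊗ 1) = γ_{k-1}(x) ⊗ ε(x) for x ∈ E; (3) d(1 ⊗ y) = 0 for y ∈ F. -/

import Mathlib

/-!
STATEMENT 1: Let `ε : E → F` be a homomorphism of finitely generated free abelian
groups.  There exists a unique endomorphism `d` of bidegree `(-1, 1)` of the bigraded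
algebra `Kos(ε) = Γ(E) ⊗ ⋀(F)` satisfying:
(1) `d(x·x') = (dx)·x' + (-1)^q x·(dx')` for `x` homogeneous of bidegree `(p, q)`;
(2) `d(γ_k(x) ⊗ 1) = γ_{k-1}(x) ⊗ ε(x)` for `x ∈ E`;
(3) `d(1 ⊗ y) = 0` for `y ∈ F`.

We realize `E = ι → ℤ`, `F = κ → ℤ` (`ι`, `κ` finite), the divided power algebra
`Γ(E)` inside `S(E ⊗ ℚ) = MvPolynomial ι ℚ` (with `γ_k(x) = (Σ xᵢ Xᵢ)^k / k!`), and
`Kos(ε)` as the bigraded subalgebra of `MvPolynomial ι ℚ ⊗[ℤ] ⋀(F)` whose bidegree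
`(p,q)` part `Hsub p q` is spanned by `Γ_p(E) ⊗ ⋀^q(F)`.  Uniqueness is asserted on
all of `Kos(ε) = ⊕_{p,q} Hsub p q`.
-/

open scoped TensorProduct

noncomputable section

variable (ι κ : Type*) [Fintype ι] [Fintype κ] [DecidableEq ι]

/-- the ambient algebra `S(E ⊗ ℚ) ⊗ ⋀(F)` containing the Koszul bigraded algebra -/
abbrev KosAmbient := TensorProduct ℤ (MvPolynomial ι ℚ) (ExteriorAlgebra ℤ (κ → ℤ))

variable {ι κ}

/-- the divided power `γ_k(x) = x^k/k!` in `S(E ⊗ ℚ)` -/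
def gammaDP (k : ℕ) (x : ι → ℤ) : MvPolynomial ι ℚ :=
  ((k.factorial : ℚ)⁻¹) • (∑ i, (x i : ℚ) • MvPolynomial.X i) ^ k

/-- the `m`-th divided power module `Γ_m(K)` of a subgroup `K ⊆ E`, spanned by the
products `γ_{n_1}(x_1) ⋯ γ_{n_r}(x_r)` with `x_j ∈ K` and `Σ n_j = m`. -/
def GammaOf (K : Submodule ℤ (ι → ℤ)) (m : ℕ) : Submodule ℤ (MvPolynomial ι ℚ) :=
  Submodule.span ℤ {z | ∃ l : List (ℕ × (ι → ℤ)),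
    (∀ pr ∈ l, pr.2 ∈ K) ∧ (l.map Prod.fst).sum = m ∧
    z = (l.map fun pr => gammaDP pr.1 pr.2).prod}

/-- the `q`-th exterior power `⋀^q F` inside `⋀(F)` -/
def extPow (κ : Type*) (q : ℕ) : Submodule ℤ (ExteriorAlgebra ℤ (κ → ℤ)) :=
  (LinearMap.range (ExteriorAlgebra.ι ℤ : (κ → ℤ) →ₗ[ℤ] ExteriorAlgebra ℤ (κ → ℤ))) ^ q

/-- the bidegree `(p,q)` component `Γ_p(E) ⊗ ⋀^q(F)` of `Kos(ε)` -/
def Hsub (ι κ : Type*) [Fintype ι] (p q : ℕ) : Submodule ℤ (KosAmbient ι κ) :=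
  Submodule.span ℤ {a | ∃ g ∈ GammaOf (⊤ : Submodule ℤ (ι → ℤ)) p,
    ∃ y ∈ extPow κ q, a = g ⊗ₜ[ℤ] y}

/-- the axioms (bidegree `(-1,1)`, graded Leibniz rule, values on the generators) for
the Koszul differential -/
def KosDiffAxioms (ε : (ι → ℤ) →ₗ[ℤ] (κ → ℤ))
    (d : KosAmbient ι κ →ₗ[ℤ] KosAmbient ι κ) : Prop :=
  -- `d` has bidegree `(-1, 1)`
  (∀ p q : ℕ, ∀ x ∈ Hsub ι κ p q, d x ∈ Hsub ι κ (p - 1) (q + 1)) ∧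
  -- (1) graded Leibniz rule for `x` homogeneous of bidegree `(p,q)`
  (∀ p q : ℕ, ∀ x ∈ Hsub ι κ p q, ∀ x' : KosAmbient ι κ,
    d (x * x') = d x * x' + ((-1 : ℤ)) ^ q • (x * d x')) ∧
  -- (2) `d(γ_k(x) ⊗ 1) = γ_{k-1}(x) ⊗ ε(x)`
  (∀ k : ℕ, 1 ≤ k → ∀ x : ι → ℤ,
    d (gammaDP k x ⊗ₜ[ℤ] 1) = gammaDP (k - 1) x ⊗ₜ[ℤ] ExteriorAlgebra.ι ℤ (ε x)) ∧
  -- (3) `d(1 ⊗ y) = 0`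
  (∀ y : κ → ℤ,
    d ((1 : MvPolynomial ι ℚ) ⊗ₜ[ℤ] ExteriorAlgebra.ι ℤ y) = 0)

open MvPolynomial

lemma gammaDP_zero (x : ι → ℤ) : gammaDP 0 x = 1 := by
  simp [gammaDP]

lemma pderiv_sumX (i : ι) (x : ι → ℤ) :
    pderiv i (∑ j, (x j : ℚ) • X j : MvPolynomial ι ℚ) = (x i : ℚ) • 1 := by
  rw [map_sum]
  simp only [Derivation.map_smul, pderiv_X]
  rw [Finset.sum_eq_single i]
  · simp
  · intro j _ hj; simp [Pi.single_eq_of_ne hj]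
  · intro h; simp at h

lemma pderiv_gammaDP (i : ι) (k : ℕ) (hk : 1 ≤ k) (x : ι → ℤ) :
    pderiv i (gammaDP k x) = (x i : ℚ) • gammaDP (k - 1) x := by
  obtain ⟨m, rfl⟩ : ∃ m, k = m + 1 := ⟨k - 1, by omega⟩
  simp only [gammaDP, Derivation.map_smul, Derivation.leibniz_pow, pderiv_sumX, Nat.add_sub_cancel]
  rw [smul_eq_mul, mul_smul_comm, mul_one]
  rw [← Nat.cast_smul_eq_nsmul ℚ (m+1), smul_smul, smul_smul, smul_smul]
  congr 1
  have h1 : ((m+1).factorial : ℚ) = (m+1) * m.factorial := by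
    rw [Nat.factorial_succ]; push_cast; ring
  have h2 : (m.factorial : ℚ) ≠ 0 := Nat.cast_ne_zero.mpr m.factorial_ne_zero
  rw [h1]
  field_simp
  push_cast; ring

set_option linter.unusedSectionVars false

/-- abbreviation for the list product of divided powers -/
def prodL (l : List (ℕ × (ι → ℤ))) : MvPolynomial ι ℚ :=
  (l.map fun pr => gammaDP pr.1 pr.2).prod

lemma prodL_mem_Gamma (l : List (ℕ × (ι → ℤ))) :
    prodL l ∈ GammaOf (⊤ : Submodule ℤ (ι → ℤ)) ((l.map Prod.fst).sum) :=
  Submodule.subset_span ⟨l, fun _ _ => trivial, rfl, rfl⟩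

lemma one_mem_Gamma : (1 : MvPolynomial ι ℚ) ∈ GammaOf (⊤ : Submodule ℤ (ι → ℤ)) 0 := by
  simpa [prodL] using prodL_mem_Gamma (ι := ι) []

lemma gammaDP_mem_Gamma (k : ℕ) (x : ι → ℤ) :
    gammaDP k x ∈ GammaOf (⊤ : Submodule ℤ (ι → ℤ)) k := by
  simpa [prodL] using prodL_mem_Gamma [(k, x)]

lemma mul_mem_Gamma (n : ℕ) (x : ι → ℤ) (m : ℕ) :
    ∀ z ∈ GammaOf (⊤ : Submodule ℤ (ι → ℤ)) m,
      gammaDP n x * z ∈ GammaOf (⊤ : Submodule ℤ (ι → ℤ)) (n + m) := by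
  intro z hz
  induction hz using Submodule.span_induction with
  | mem w hw =>
    obtain ⟨l, -, hsum, rfl⟩ := hw
    exact Submodule.subset_span ⟨(n, x) :: l, fun _ _ => trivial, by simp [hsum], by simp⟩
  | zero => simpa using zero_mem _
  | add a b _ _ ha hb => rw [mul_add]; exact add_mem ha hb
  | smul z a _ ha => rw [mul_smul_comm]; exact Submodule.smul_mem _ _ ha

lemma pderiv_prodL (i : ι) (l : List (ℕ × (ι → ℤ))) :
    pderiv i (prodL l) ∈ GammaOf (⊤ : Submodule ℤ (ι → ℤ)) ((l.map Prod.fst).sum - 1)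
    ∧ ((l.map Prod.fst).sum = 0 → pderiv i (prodL l) = 0) := by
  induction l with
  | nil =>
    refine ⟨?_, fun _ => ?_⟩ <;> simp [prodL, Derivation.map_one_eq_zero]
  | cons pr t ih =>
    obtain ⟨n, x⟩ := pr
    have hexp : prodL ((n, x) :: t) = gammaDP n x * prodL t := by simp [prodL]
    rw [hexp, Derivation.leibniz, smul_eq_mul, smul_eq_mul]
    simp only [List.map_cons, List.sum_cons]
    rcases Nat.eq_zero_or_pos n with rfl | hn
    · rw [gammaDP_zero, Derivation.map_one_eq_zero, mul_zero, add_zero, one_mul]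
      simpa using ih
    · constructor
      · refine add_mem ?_ ?_
        · -- γ_n x * D (prodL t)
          rcases Nat.eq_zero_or_pos ((t.map Prod.fst).sum) with hs | hs
          · rw [ih.2 hs, mul_zero]; exact zero_mem _
          · have := mul_mem_Gamma n x _ _ ih.1
            have he : n + ((t.map Prod.fst).sum - 1) = n + (t.map Prod.fst).sum - 1 := by omega
            rwa [he] at this
        · -- prodL t * D (γ_n x)
          rw [pderiv_gammaDP i n hn x, Int.cast_smul_eq_zsmul, mul_smul_comm]
          refine Submodule.smul_mem _ _ ?_
          have : gammaDP (n-1) x * prodL t ∈ GammaOf ⊤ ((n-1) + (t.map Prod.fst).sum) :=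
            mul_mem_Gamma _ _ _ _ (prodL_mem_Gamma t)
          have he : (n-1) + ((t.map Prod.fst).sum) = n + (t.map Prod.fst).sum - 1 := by omega
          rw [he] at this
          rwa [mul_comm]
      · intro h; omega

lemma pderiv_mem_Gamma (i : ι) (p : ℕ) :
    ∀ g ∈ GammaOf (⊤ : Submodule ℤ (ι → ℤ)) p,
      pderiv i g ∈ GammaOf (⊤ : Submodule ℤ (ι → ℤ)) (p - 1) := by
  intro g hg
  induction hg using Submodule.span_induction with
  | mem w hw =>
    obtain ⟨l, -, hsum, rfl⟩ := hw
    simpa [prodL, hsum] using (pderiv_prodL i l).1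
  | zero => simpa using zero_mem _
  | add a b _ _ ha hb => rw [map_add]; exact add_mem ha hb
  | smul z a _ ha => rw [map_zsmul]; exact Submodule.smul_mem _ _ ha

lemma one_mem_extPow : (1 : ExteriorAlgebra ℤ (κ → ℤ)) ∈ extPow κ 0 := by
  rw [extPow, pow_zero]
  exact Submodule.mem_one.mpr ⟨1, map_one _⟩

lemma iota_mem_extPow (z : κ → ℤ) : ExteriorAlgebra.ι ℤ z ∈ extPow κ 1 := by
  rw [extPow, pow_one]; exact ⟨z, rfl⟩

lemma mul_mem_extPow (z : κ → ℤ) (q : ℕ) (y : ExteriorAlgebra ℤ (κ → ℤ))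
    (hy : y ∈ extPow κ q) : ExteriorAlgebra.ι ℤ z * y ∈ extPow κ (q + 1) := by
  rw [extPow, pow_succ']
  exact Submodule.mul_mem_mul ⟨z, rfl⟩ hy

lemma extPow_anticomm (q : ℕ) (y : ExteriorAlgebra ℤ (κ → ℤ)) (hy : y ∈ extPow κ q)
    (z : κ → ℤ) :
    y * ExteriorAlgebra.ι ℤ z = ((-1 : ℤ) ^ q) • (ExteriorAlgebra.ι ℤ z * y) := by
  induction q generalizing y with
  | zero =>
    obtain ⟨n, rfl⟩ := Submodule.mem_one.mp (by rw [extPow, pow_zero] at hy; exact hy)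
    simp only [pow_zero, one_smul]
    exact Algebra.commutes n _
  | succ q ih =>
    rw [extPow, pow_succ] at hy
    refine Submodule.mul_induction_on hy ?_ ?_
    · rintro b hb a ⟨w, rfl⟩
      have h2 : ExteriorAlgebra.ι ℤ w * ExteriorAlgebra.ι ℤ z
          = -(ExteriorAlgebra.ι ℤ z * ExteriorAlgebra.ι ℤ w) :=
        eq_neg_of_add_eq_zero_left (ExteriorAlgebra.ι_add_mul_swap w z)
      calc b * ExteriorAlgebra.ι ℤ w * ExteriorAlgebra.ι ℤ z
          = b * (ExteriorAlgebra.ι ℤ w * ExteriorAlgebra.ι ℤ z) := by rw [mul_assoc]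
        _ = -(b * ExteriorAlgebra.ι ℤ z * ExteriorAlgebra.ι ℤ w) := by
            rw [h2, mul_neg, mul_assoc]
        _ = -((((-1 : ℤ) ^ q) • (ExteriorAlgebra.ι ℤ z * b)) * ExteriorAlgebra.ι ℤ w) := by
            rw [ih b hb]
        _ = ((-1 : ℤ) ^ (q+1)) • (ExteriorAlgebra.ι ℤ z * (b * ExteriorAlgebra.ι ℤ w)) := by
            rw [smul_mul_assoc, pow_succ, mul_smul, neg_one_zsmul, smul_neg, mul_assoc]
    · intro a b ha hb
      rw [add_mul, ha, hb, mul_add, smul_add]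

def kosC (ε : (ι → ℤ) →ₗ[ℤ] (κ → ℤ)) (i : ι) : ExteriorAlgebra ℤ (κ → ℤ) :=
  ExteriorAlgebra.ι ℤ (ε (Pi.single i 1))

def kosD (ε : (ι → ℤ) →ₗ[ℤ] (κ → ℤ)) : KosAmbient ι κ →ₗ[ℤ] KosAmbient ι κ :=
  ∑ i, TensorProduct.map (((MvPolynomial.pderiv i).toLinearMap).restrictScalars ℤ)
    (LinearMap.mulLeft ℤ (kosC ε i))

lemma kosD_tmul (ε : (ι → ℤ) →ₗ[ℤ] (κ → ℤ)) (f : MvPolynomial ι ℚ)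
    (y : ExteriorAlgebra ℤ (κ → ℤ)) :
    kosD ε (f ⊗ₜ[ℤ] y) = ∑ i, pderiv i f ⊗ₜ[ℤ] (kosC ε i * y) := by
  unfold kosD
  exact (LinearMap.sum_apply _ _ _).trans (Finset.sum_congr rfl fun i _ => rfl)

lemma tmul_mem_Hsub {p q : ℕ} {g : MvPolynomial ι ℚ} {y : ExteriorAlgebra ℤ (κ → ℤ)}
    (hg : g ∈ GammaOf (⊤ : Submodule ℤ (ι → ℤ)) p) (hy : y ∈ extPow κ q) :
    g ⊗ₜ[ℤ] y ∈ Hsub ι κ p q :=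
  Submodule.subset_span ⟨g, hg, y, hy, rfl⟩

lemma one_mem_Hsub : (1 : KosAmbient ι κ) ∈ Hsub ι κ 0 0 := by
  rw [Algebra.TensorProduct.one_def]
  exact tmul_mem_Hsub one_mem_Gamma one_mem_extPow

lemma kosD_bidegree (ε : (ι → ℤ) →ₗ[ℤ] (κ → ℤ)) (p q : ℕ) :
    ∀ x ∈ Hsub ι κ p q, kosD ε x ∈ Hsub ι κ (p - 1) (q + 1) := by
  intro x hx
  have hle : Hsub ι κ p q ≤ Submodule.comap (kosD ε) (Hsub ι κ (p - 1) (q + 1)) := by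
    rw [Hsub, Submodule.span_le]
    rintro a ⟨g, hg, y, hy, rfl⟩
    simp only [SetLike.mem_coe, Submodule.mem_comap, kosD_tmul]
    exact Submodule.sum_mem _ fun i _ =>
      tmul_mem_Hsub (pderiv_mem_Gamma i p g hg) (mul_mem_extPow _ q y hy)
  exact hle hx

lemma kosD_gamma (ε : (ι → ℤ) →ₗ[ℤ] (κ → ℤ)) (k : ℕ) (hk : 1 ≤ k) (x : ι → ℤ) :
    kosD ε (gammaDP k x ⊗ₜ[ℤ] 1) = gammaDP (k - 1) x ⊗ₜ[ℤ] ExteriorAlgebra.ι ℤ (ε x) := by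
  rw [kosD_tmul]
  have h1 : ∀ i : ι, pderiv i (gammaDP k x) ⊗ₜ[ℤ] (kosC ε i * 1)
      = gammaDP (k - 1) x ⊗ₜ[ℤ] (x i • kosC ε i) := by
    intro i
    rw [mul_one, pderiv_gammaDP i k hk x, Int.cast_smul_eq_zsmul, TensorProduct.smul_tmul]
  rw [Finset.sum_congr rfl fun i _ => h1 i, ← TensorProduct.tmul_sum]
  congr 1
  have hx' : x = ∑ i, x i • Pi.single i (1 : ℤ) := by
    funext j
    simp [Finset.sum_apply, Pi.single_apply, Finset.sum_ite_eq']
  conv_rhs => rw [hx', map_sum, map_sum]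
  exact Finset.sum_congr rfl fun i _ => by rw [map_smul, map_smul]; rfl

lemma kosD_vanish (ε : (ι → ℤ) →ₗ[ℤ] (κ → ℤ)) (y : κ → ℤ) :
    kosD ε ((1 : MvPolynomial ι ℚ) ⊗ₜ[ℤ] ExteriorAlgebra.ι ℤ y) = 0 := by
  rw [kosD_tmul]
  simp [Derivation.map_one_eq_zero]

lemma neg_one_pow_sq (q : ℕ) : ((-1 : ℤ) ^ q) * ((-1 : ℤ) ^ q) = 1 := by
  rw [← pow_add]
  exact Even.neg_one_pow ⟨q, rfl⟩

lemma kosD_leibniz (ε : (ι → ℤ) →ₗ[ℤ] (κ → ℤ)) (p q : ℕ) :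
    ∀ x ∈ Hsub ι κ p q, ∀ x' : KosAmbient ι κ,
      kosD ε (x * x') = kosD ε x * x' + ((-1 : ℤ)) ^ q • (x * kosD ε x') := by
  intro x hx
  induction hx using Submodule.span_induction with
  | mem a ha =>
    obtain ⟨g, hg, y, hy, rfl⟩ := ha
    intro x'
    induction x' using TensorProduct.induction_on with
    | zero => simp
    | add u v hu hv =>
      rw [mul_add, map_add, hu, hv, map_add, mul_add, mul_add, smul_add]
      abel
    | tmul f' y' =>
      rw [Algebra.TensorProduct.tmul_mul_tmul, kosD_tmul, kosD_tmul, kosD_tmul,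
        Finset.sum_mul, Finset.mul_sum, Finset.smul_sum, ← Finset.sum_add_distrib]
      refine Finset.sum_congr rfl fun i _ => ?_
      rw [Algebra.TensorProduct.tmul_mul_tmul, Algebra.TensorProduct.tmul_mul_tmul,
        Derivation.leibniz, smul_eq_mul, smul_eq_mul, TensorProduct.add_tmul]
      have hAC : y * (kosC ε i * y') = ((-1 : ℤ) ^ q) • (kosC ε i * (y * y')) := by
        rw [← mul_assoc, show y * kosC ε i = ((-1:ℤ)^q) • (kosC ε i * y) from extPow_anticomm q y hy _, smul_mul_assoc, mul_assoc]
      rw [hAC, TensorProduct.tmul_smul, smul_smul, neg_one_pow_sq, one_smul]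
      rw [add_comm, mul_comm f' (pderiv i g), mul_assoc]
  | zero => intro x'; simp
  | add a b _ _ iha ihb =>
    intro x'
    rw [add_mul, map_add, iha, ihb, map_add, add_mul, add_mul, smul_add]
    abel
  | smul z a _ ih =>
    intro x'
    rw [smul_mul_assoc, map_smul, ih, map_smul, smul_add, smul_mul_assoc,
      smul_comm z ((-1 : ℤ) ^ q), smul_mul_assoc]

theorem statement1 (ε : (ι → ℤ) →ₗ[ℤ] (κ → ℤ)) :
    -- existence
    (∃ d : KosAmbient ι κ →ₗ[ℤ] KosAmbient ι κ, KosDiffAxioms ε d) ∧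
    -- uniqueness (as an endomorphism of `Kos(ε) = ⊕_{p,q} Γ_p(E) ⊗ ⋀^q(F)`)
    (∀ d₁ d₂ : KosAmbient ι κ →ₗ[ℤ] KosAmbient ι κ,
      KosDiffAxioms ε d₁ → KosDiffAxioms ε d₂ →
      ∀ p q : ℕ, ∀ x ∈ Hsub ι κ p q, d₁ x = d₂ x) := by
  constructor
  · exact ⟨kosD ε, kosD_bidegree ε, kosD_leibniz ε, kosD_gamma ε, kosD_vanish ε⟩
  · intro d₁ d₂ h₁ h₂
    obtain ⟨-, L₁, G₁, Z₁⟩ := h₁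
    obtain ⟨-, L₂, G₂, Z₂⟩ := h₂
    set δ : KosAmbient ι κ →ₗ[ℤ] KosAmbient ι κ := d₁ - d₂ with hδ
    have δL : ∀ p q : ℕ, ∀ x ∈ Hsub ι κ p q, ∀ x' : KosAmbient ι κ,
        δ (x * x') = δ x * x' + ((-1 : ℤ)) ^ q • (x * δ x') := by
      intro p q x hx x'
      simp only [hδ, LinearMap.sub_apply, L₁ p q x hx x', L₂ p q x hx x', sub_mul, mul_sub,
        smul_sub]
      abel
    have δ1 : δ (1 : KosAmbient ι κ) = 0 := by
      have h := δL 0 0 1 one_mem_Hsub 1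
      simp only [mul_one, pow_zero, one_smul, one_mul] at h
      simpa using h
    have δγ : ∀ (k : ℕ) (x : ι → ℤ), δ (gammaDP k x ⊗ₜ[ℤ] (1 : ExteriorAlgebra ℤ (κ → ℤ))) = 0 := by
      intro k x
      rcases Nat.eq_zero_or_pos k with rfl | hk
      · rw [gammaDP_zero, ← Algebra.TensorProduct.one_def]
        exact δ1
      · simp [hδ, LinearMap.sub_apply, G₁ k hk x, G₂ k hk x]
    have δext : ∀ q : ℕ, ∀ y ∈ extPow κ q, δ ((1 : MvPolynomial ι ℚ) ⊗ₜ[ℤ] y) = 0 := by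
      intro q
      induction q with
      | zero =>
        intro y hy
        obtain ⟨n, rfl⟩ := Submodule.mem_one.mp (by rw [extPow, pow_zero] at hy; exact hy)
        have he : (1 : MvPolynomial ι ℚ) ⊗ₜ[ℤ] (algebraMap ℤ (ExteriorAlgebra ℤ (κ → ℤ)) n)
            = n • (1 : KosAmbient ι κ) := by
          rw [Algebra.algebraMap_eq_smul_one, TensorProduct.tmul_smul,
            Algebra.TensorProduct.one_def]
        rw [he, map_smul, δ1, smul_zero]
      | succ q ih =>
        intro y hy
        rw [extPow, pow_succ'] at hy
        refine Submodule.mul_induction_on hy ?_ ?_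
        · rintro a ⟨w, rfl⟩ b hb
          have he : (1 : MvPolynomial ι ℚ) ⊗ₜ[ℤ] (ExteriorAlgebra.ι ℤ w * b)
              = ((1 : MvPolynomial ι ℚ) ⊗ₜ[ℤ] ExteriorAlgebra.ι ℤ w)
                * ((1 : MvPolynomial ι ℚ) ⊗ₜ[ℤ] b) := by
            rw [Algebra.TensorProduct.tmul_mul_tmul, one_mul]
          rw [he, δL 0 1 _ (tmul_mem_Hsub one_mem_Gamma (iota_mem_extPow w)) _, ih b hb,
            mul_zero, smul_zero, add_zero]
          have hz : δ ((1 : MvPolynomial ι ℚ) ⊗ₜ[ℤ] ExteriorAlgebra.ι ℤ w) = 0 := by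
            simp [hδ, LinearMap.sub_apply, Z₁ w, Z₂ w]
          rw [hz, zero_mul]
        · intro a b ha hb
          rw [TensorProduct.tmul_add, map_add, ha, hb, add_zero]
    have δprod : ∀ l : List (ℕ × (ι → ℤ)), ∀ w : KosAmbient ι κ, δ w = 0 →
        δ ((prodL l ⊗ₜ[ℤ] (1 : ExteriorAlgebra ℤ (κ → ℤ))) * w) = 0 := by
      intro l
      induction l with
      | nil =>
        intro w hw
        have : prodL (ι := ι) [] = 1 := by simp [prodL]
        rw [this, ← Algebra.TensorProduct.one_def, one_mul]
        exact hw
      | cons pr t ih =>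
        intro w hw
        have hexp : prodL (pr :: t) = gammaDP pr.1 pr.2 * prodL t := by simp [prodL]
        have key : (prodL (pr :: t) ⊗ₜ[ℤ] (1 : ExteriorAlgebra ℤ (κ → ℤ))) * w
            = (gammaDP pr.1 pr.2 ⊗ₜ[ℤ] (1 : ExteriorAlgebra ℤ (κ → ℤ)))
              * ((prodL t ⊗ₜ[ℤ] (1 : ExteriorAlgebra ℤ (κ → ℤ))) * w) := by
          rw [← mul_assoc, Algebra.TensorProduct.tmul_mul_tmul, one_mul, hexp]
        rw [key, δL pr.1 0 _ (tmul_mem_Hsub (gammaDP_mem_Gamma _ _) one_mem_extPow) _,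
          δγ, zero_mul, zero_add, pow_zero, one_smul, ih w hw, mul_zero]
    intro p q x hx
    have hker : Hsub ι κ p q ≤ LinearMap.ker δ := by
      rw [Hsub, Submodule.span_le]
      rintro a ⟨g, hg, y, hy, rfl⟩
      have hin : GammaOf (⊤ : Submodule ℤ (ι → ℤ)) p ≤
          Submodule.comap ((TensorProduct.mk ℤ (MvPolynomial ι ℚ)
            (ExteriorAlgebra ℤ (κ → ℤ))).flip y) (LinearMap.ker δ) := by
        rw [GammaOf, Submodule.span_le]
        rintro z ⟨l, -, -, rfl⟩
        simp only [SetLike.mem_coe, Submodule.mem_comap, LinearMap.mem_ker,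
          LinearMap.flip_apply, TensorProduct.mk_apply]
        have he : (prodL l) ⊗ₜ[ℤ] y
            = (prodL l ⊗ₜ[ℤ] (1 : ExteriorAlgebra ℤ (κ → ℤ)))
              * ((1 : MvPolynomial ι ℚ) ⊗ₜ[ℤ] y) := by
          rw [Algebra.TensorProduct.tmul_mul_tmul, mul_one, one_mul]
        rw [show (l.map fun pr => gammaDP pr.1 pr.2).prod = prodL l from rfl, he]
        exact δprod l _ (δext q y hy)
      exact hin hg
    have := hker hx
    rw [LinearMap.mem_ker, hδ, LinearMap.sub_apply, sub_eq_zero] at this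
    exact this

end
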